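/- There exists a premetric space (X,d) with four points in which the interior (with respect to the generated topology τ_d) of the ball B_2(a) of radius 2 about some point a does not contain a. -/

import Mathlib

open scoped NNReal

/-- ε-δ continuity between premetric spaces. -/
def IsEDContinuous {X Y : Type*} (d : X → X → ℝ≥0) (m : Y → Y → ℝ≥0) (f : X → Y) : Prop :=
  ∀ x : X, ∀ ε : ℝ≥0, 0 < ε → ∃ δ : ℝ≥0, 0 < δ ∧ ∀ x', d x x' < δ → m (f x) (f x') < ε

/-- Topology generated by a premetric. -/
def premetricTopology {X : Type*} (d : X → X → ℝ≥0) : TopologicalSpace X where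
  IsOpen U := ∀ x ∈ U, ∃ ε : ℝ≥0, 0 < ε ∧ ∀ y, d x y < ε → y ∈ U
  isOpen_univ := fun _ _ => ⟨1, one_pos, fun _ _ => trivial⟩
  isOpen_inter := by
    rintro s t hs ht x ⟨hxs, hxt⟩
    obtain ⟨ε₁, hε₁, h₁⟩ := hs x hxs
    obtain ⟨ε₂, hε₂, h₂⟩ := ht x hxt
    exact ⟨min ε₁ ε₂, lt_min hε₁ hε₂, fun y hy =>
      ⟨h₁ y (hy.trans_le (min_le_left _ _)), h₂ y (hy.trans_le (min_le_right _ _))⟩⟩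
  isOpen_sUnion := by
    rintro S hS x ⟨s, hsS, hxs⟩
    obtain ⟨ε, hε, h⟩ := hS s hsS x hxs
    exact ⟨ε, hε, fun y hy => ⟨s, hsS, h y hy⟩⟩

/-- a four-point premetric space where the interior of the ball of
radius 2 about a point `a` does not contain `a`. -/
theorem exists_premetric_ball_interior_not_mem :
    ∃ (d : Fin 4 → Fin 4 → ℝ≥0), (∀ x, d x x = 0) ∧
      ∃ a : Fin 4, a ∉ @interior _ (premetricTopology d) {y | d a y < 2} := by
  refine ⟨fun x y => if x = y then 0 else
    if (x = 0 ∧ y = 1) ∨ (x = 1 ∧ y = 0) ∨ (x = 1 ∧ y = 2) ∨ (x = 2 ∧ y = 1) then 0 else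
    if (x = 0 ∧ y = 2) ∨ (x = 2 ∧ y = 0) then 2 else 1,
    fun x => by simp, 0, ?_⟩
  intro h
  obtain ⟨U, hUS, hUopen, haU⟩ := (@mem_interior (Fin 4) (premetricTopology _) _ _).mp h
  obtain ⟨ε, hε, h1⟩ := hUopen 0 haU
  have hb : (1 : Fin 4) ∈ U := h1 1 (by simpa using hε)
  obtain ⟨ε', hε', h2⟩ := hUopen 1 hb
  have hc : (2 : Fin 4) ∈ U := h2 2 (by simpa using hε')
  have := hUS hc
  simp [Set.mem_setOf_eq] at this
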